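/- The optimal constant D such that (|a|^{4/3} + |b|^{4/3} + |c|^{4/3})^{3/4} ≤ D · sup_{(x,y)∈[−1,1]²} |ax² + bxy + cy²| for all a, b, c ∈ ℝ equals max_{t∈[1/2,1]} (2 t^{4/3} + (2√(t(1−t)))^{4/3})^{3/4}, which lies in the interval (1.8373, 1.8374). -/
import Mathlib

/-- Supremum of `|a x² + b x y + c y²|` over the unit square `[-1,1]²`. -/
noncomputable def supSquare (a b c : ℝ) : ℝ :=
  sSup {r : ℝ | ∃ x y : ℝ, |x| ≤ 1 ∧ |y| ≤ 1 ∧ r = |a * x^2 + b * x * y + c * y^2|}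

noncomputable def f (t : ℝ) : ℝ :=
  (2 * t ^ ((4:ℝ)/3) + (2 * Real.sqrt (t * (1 - t))) ^ ((4:ℝ)/3)) ^ ((3:ℝ)/4)


lemma bddSS (a b c : ℝ) : BddAbove {r : ℝ | ∃ x y : ℝ, |x| ≤ 1 ∧ |y| ≤ 1 ∧ r = |a * x^2 + b * x * y + c * y^2|} := by
  refine ⟨|a| + |b| + |c|, ?_⟩
  rintro r ⟨x, y, hx, hy, rfl⟩
  obtain ⟨hx1, hx2⟩ := abs_le.mp hx
  obtain ⟨hy1, hy2⟩ := abs_le.mp hy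
  have hax : |x^2| ≤ 1 := by rw [abs_le]; constructor <;> nlinarith
  have hay : |y^2| ≤ 1 := by rw [abs_le]; constructor <;> nlinarith
  have h1 : |a * x^2| ≤ |a| := by
    rw [abs_mul]
    nlinarith [abs_nonneg a, abs_nonneg (x^2)]
  have h2 : |b * x * y| ≤ |b| := by
    rw [abs_mul, abs_mul]
    nlinarith [abs_nonneg b, abs_nonneg x, abs_nonneg y, mul_nonneg (abs_nonneg b) (abs_nonneg x)]
  have h3 : |c * y^2| ≤ |c| := by
    rw [abs_mul]
    nlinarith [abs_nonneg c, abs_nonneg (y^2)]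
  calc |a * x^2 + b * x * y + c * y^2| ≤ |a * x^2 + b * x * y| + |c * y^2| := abs_add_le _ _
    _ ≤ |a * x^2| + |b * x * y| + |c * y^2| := by linarith [abs_add_le (a*x^2) (b*x*y)]
    _ ≤ |a| + |b| + |c| := by linarith

lemma eval_le (a b c x y : ℝ) (hx : |x| ≤ 1) (hy : |y| ≤ 1) :
    |a * x^2 + b * x * y + c * y^2| ≤ supSquare a b c :=
  le_csSup (bddSS a b c) ⟨x, y, hx, hy, rfl⟩

lemma supSquare_nonneg (a b c : ℝ) : 0 ≤ supSquare a b c := by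
  have := eval_le a b c 0 0 (by norm_num) (by norm_num)
  have h0 : (0:ℝ) ≤ |a * 0^2 + b * 0 * 0 + c * 0^2| := abs_nonneg _
  linarith

lemma supSquare_le (a b c M : ℝ) (hM : 0 ≤ M)
    (h : ∀ x y : ℝ, |x| ≤ 1 → |y| ≤ 1 → |a * x^2 + b * x * y + c * y^2| ≤ M) :
    supSquare a b c ≤ M := by
  apply Real.sSup_le _ hM
  rintro r ⟨x, y, hx, hy, rfl⟩
  exact h x y hx hy

lemma supSquare_swap_le (a b c : ℝ) : supSquare a b c ≤ supSquare c b a := by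
  apply supSquare_le _ _ _ _ (supSquare_nonneg c b a)
  intro x y hx hy
  have := eval_le c b a y x hy hx
  have e : c * y^2 + b * y * x + a * x^2 = a * x^2 + b * x * y + c * y^2 := by ring
  rwa [e] at this

lemma supSquare_swap (a b c : ℝ) : supSquare a b c = supSquare c b a :=
  le_antisymm (supSquare_swap_le a b c) (supSquare_swap_le c b a)

lemma supSquare_negb_le (a b c : ℝ) : supSquare a b c ≤ supSquare a (-b) c := by
  apply supSquare_le _ _ _ _ (supSquare_nonneg a (-b) c)
  intro x y hx hy
  have hx' : |(-x)| ≤ 1 := by rwa [abs_neg]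
  have := eval_le a (-b) c (-x) y hx' hy
  have e : a * (-x)^2 + (-b) * (-x) * y + c * y^2 = a * x^2 + b * x * y + c * y^2 := by ring
  rwa [e] at this

lemma supSquare_negb (a b c : ℝ) : supSquare a (-b) c = supSquare a b c := by
  have h1 := supSquare_negb_le a b c
  have h2 := supSquare_negb_le a (-b) c
  rw [neg_neg] at h2
  exact le_antisymm h2 h1

lemma supSquare_negall_le (a b c : ℝ) : supSquare a b c ≤ supSquare (-a) (-b) (-c) := by
  apply supSquare_le _ _ _ _ (supSquare_nonneg _ _ _)
  intro x y hx hy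
  have := eval_le (-a) (-b) (-c) x y hx hy
  have e : (-a) * x^2 + (-b) * x * y + (-c) * y^2 = -(a * x^2 + b * x * y + c * y^2) := by ring
  rwa [e, abs_neg] at this

lemma supSquare_neg (a b c : ℝ) : supSquare (-a) (-b) (-c) = supSquare a b c := by
  have h1 := supSquare_negall_le a b c
  have h2 := supSquare_negall_le (-a) (-b) (-c)
  rw [neg_neg, neg_neg, neg_neg] at h2
  exact le_antisymm h2 h1

lemma supSquare_smul_le (a b c k : ℝ) (hk : 0 ≤ k) :
    supSquare (k*a) (k*b) (k*c) ≤ k * supSquare a b c := by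
  apply supSquare_le _ _ _ _ (mul_nonneg hk (supSquare_nonneg a b c))
  intro x y hx hy
  have e : (k*a) * x^2 + (k*b) * x * y + (k*c) * y^2 = k * (a * x^2 + b * x * y + c * y^2) := by ring
  rw [e, abs_mul, abs_of_nonneg hk]
  exact mul_le_mul_of_nonneg_left (eval_le a b c x y hx hy) hk

lemma supSquare_smul (a b c k : ℝ) (hk : 0 < k) :
    supSquare (k*a) (k*b) (k*c) = k * supSquare a b c := by
  refine le_antisymm (supSquare_smul_le a b c k hk.le) ?_
  have h2 := supSquare_smul_le (k*a) (k*b) (k*c) k⁻¹ (by positivity)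
  rw [inv_mul_cancel_left₀ hk.ne', inv_mul_cancel_left₀ hk.ne', inv_mul_cancel_left₀ hk.ne'] at h2
  calc k * supSquare a b c ≤ k * (k⁻¹ * supSquare (k*a) (k*b) (k*c)) :=
        mul_le_mul_of_nonneg_left h2 hk.le
    _ = supSquare (k*a) (k*b) (k*c) := by field_simp

lemma chord (x : ℝ) (h0 : 0 ≤ x) (h1 : x ≤ 1) : x ^ ((4:ℝ)/3) ≤ x := by
  rcases h0.eq_or_lt with h | h
  · rw [← h, Real.zero_rpow (by norm_num)]
  · calc x ^ ((4:ℝ)/3) ≤ x ^ (1:ℝ) := Real.rpow_le_rpow_of_exponent_ge h h1 (by norm_num)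
      _ = x := Real.rpow_one x

lemma cbrt_cube (w : ℝ) (hw : 0 ≤ w) : (w ^ ((1:ℝ)/3)) ^ (3:ℕ) = w := by
  rw [← Real.rpow_natCast (w ^ ((1:ℝ)/3)) 3, ← Real.rpow_mul hw]
  norm_num

lemma rpow23_eq (w : ℝ) (hw : 0 ≤ w) : w ^ ((2:ℝ)/3) = (w ^ ((1:ℝ)/3)) ^ (2:ℕ) := by
  rw [← Real.rpow_natCast (w ^ ((1:ℝ)/3)) 2, ← Real.rpow_mul hw]
  norm_num

lemma rpow43_eq (t : ℝ) (ht : 0 < t) : t ^ ((4:ℝ)/3) = t * t ^ ((1:ℝ)/3) := by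
  rw [show (4:ℝ)/3 = 1 + 1/3 by norm_num, Real.rpow_add ht, Real.rpow_one]

lemma rpow43_sq (x : ℝ) (hx : 0 ≤ x) : x ^ ((4:ℝ)/3) = (x^(2:ℕ)) ^ ((2:ℝ)/3) := by
  rw [← Real.rpow_natCast x 2, ← Real.rpow_mul hx]
  norm_num

lemma two_sqrt_pow (t : ℝ) (ht : 0 ≤ t * (1-t)) :
    (2 * Real.sqrt (t * (1 - t))) ^ ((4:ℝ)/3) = (4*t*(1-t)) ^ ((2:ℝ)/3) := by
  rw [rpow43_sq _ (by positivity)]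
  congr 1
  rw [mul_pow, Real.sq_sqrt ht]
  ring

lemma f_eq (t : ℝ) (ht : t ∈ Set.Icc (1/2 : ℝ) 1) :
    f t = (2 * t ^ ((4:ℝ)/3) + (4*t*(1-t)) ^ ((2:ℝ)/3)) ^ ((3:ℝ)/4) := by
  rw [f, two_sqrt_pow t (by nlinarith [ht.1, ht.2])]

lemma f_pow43 (t : ℝ) (ht : t ∈ Set.Icc (1/2 : ℝ) 1) :
    f t ^ ((4:ℝ)/3) = 2 * t ^ ((4:ℝ)/3) + (4*t*(1-t)) ^ ((2:ℝ)/3) := by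
  have hX : (0:ℝ) ≤ 2 * t ^ ((4:ℝ)/3) + (4*t*(1-t)) ^ ((2:ℝ)/3) := by
    have h1 : (0:ℝ) ≤ t ^ ((4:ℝ)/3) := Real.rpow_nonneg (by linarith [ht.1]) _
    have h2 : (0:ℝ) ≤ (4*t*(1-t)) ^ ((2:ℝ)/3) := Real.rpow_nonneg (by nlinarith [ht.1, ht.2]) _
    linarith
  rw [f_eq t ht, ← Real.rpow_mul hX]
  norm_num

lemma f_nonneg (t : ℝ) (ht : t ∈ Set.Icc (1/2 : ℝ) 1) : 0 ≤ f t := by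
  have h1 : (0:ℝ) ≤ t ^ ((4:ℝ)/3) := Real.rpow_nonneg (by linarith [ht.1]) _
  exact Real.rpow_nonneg (by positivity) _

lemma f_le_three (t : ℝ) (ht : t ∈ Set.Icc (1/2 : ℝ) 1) : f t ≤ 3 := by
  obtain ⟨ht1, ht2⟩ := ht
  have ht0 : (0:ℝ) ≤ t := by linarith
  have h1 : t ^ ((4:ℝ)/3) ≤ 1 := Real.rpow_le_one ht0 ht2 (by norm_num)
  have hs : Real.sqrt (t*(1-t)) ≤ 1/2 := by
    have : t*(1-t) ≤ (1/2)^2 := by nlinarith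
    calc Real.sqrt (t*(1-t)) ≤ Real.sqrt ((1/2)^2) := Real.sqrt_le_sqrt this
      _ = 1/2 := Real.sqrt_sq (by norm_num)
  have h2 : (2 * Real.sqrt (t * (1-t))) ^ ((4:ℝ)/3) ≤ 1 :=
    Real.rpow_le_one (by positivity) (by linarith) (by norm_num)
  have hX : 2 * t ^ ((4:ℝ)/3) + (2 * Real.sqrt (t * (1 - t))) ^ ((4:ℝ)/3) ≤ 3 := by linarith
  have hX0 : (0:ℝ) ≤ 2 * t ^ ((4:ℝ)/3) + (2 * Real.sqrt (t * (1 - t))) ^ ((4:ℝ)/3) := by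
    have := Real.rpow_nonneg ht0 ((4:ℝ)/3)
    have := Real.rpow_nonneg (show (0:ℝ) ≤ 2 * Real.sqrt (t*(1-t)) by positivity) ((4:ℝ)/3)
    linarith
  calc f t ≤ (3:ℝ) ^ ((3:ℝ)/4) := Real.rpow_le_rpow hX0 hX (by norm_num)
    _ ≤ (3:ℝ) ^ (1:ℝ) := Real.rpow_le_rpow_of_exponent_le (by norm_num) (by norm_num)
    _ = 3 := Real.rpow_one 3

lemma bddf : BddAbove (f '' Set.Icc (1/2 : ℝ) 1) := by
  refine ⟨3, ?_⟩
  rintro v ⟨t, ht, rfl⟩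
  exact f_le_three t ht

lemma f_le_L (t : ℝ) (ht : t ∈ Set.Icc (1/2 : ℝ) 1) :
    f t ≤ sSup (f '' Set.Icc (1/2 : ℝ) 1) :=
  le_csSup bddf ⟨t, ht, rfl⟩

lemma cube_le_cube (y β : ℝ) (hy : 0 ≤ y) (h : β^(3:ℕ) ≤ y^(3:ℕ)) : β ≤ y := by
  by_contra hlt
  push_neg at hlt
  have := pow_lt_pow_left₀ hlt hy (n := 3) (by norm_num)
  linarith

lemma M_t0_ge :
    (2.2503805 : ℝ) ≤ 2 * ((217:ℝ)/250) ^ ((4:ℝ)/3) + (4*((217:ℝ)/250)*(1-(217:ℝ)/250)) ^ ((2:ℝ)/3) := by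
  have ht0 : (0:ℝ) < (217:ℝ)/250 := by norm_num
  have hw0 : (0:ℝ) ≤ 4*((217:ℝ)/250)*(1-(217:ℝ)/250) := by norm_num
  set y : ℝ := ((217:ℝ)/250) ^ ((1:ℝ)/3) with hydef
  set z : ℝ := (4*((217:ℝ)/250)*(1-(217:ℝ)/250)) ^ ((1:ℝ)/3) with hzdef
  have hy0 : 0 ≤ y := Real.rpow_nonneg ht0.le _
  have hz0 : 0 ≤ z := Real.rpow_nonneg hw0 _
  have hy3 : y ^ (3:ℕ) = (217:ℝ)/250 := cbrt_cube _ ht0.le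
  have hz3 : z ^ (3:ℕ) = 4*((217:ℝ)/250)*(1-(217:ℝ)/250) := cbrt_cube _ hw0
  have hy : (9539:ℝ)/10000 ≤ y := by
    apply cube_le_cube y _ hy0
    rw [hy3]; norm_num
  have hz : (77098:ℝ)/100000 ≤ z := by
    apply cube_le_cube z _ hz0
    rw [hz3]; norm_num
  rw [rpow43_eq _ ht0, rpow23_eq _ hw0, ← hydef, ← hzdef]
  have h2 : ((77098:ℝ)/100000)^(2:ℕ) ≤ z^(2:ℕ) := by nlinarith
  nlinarith [hy, h2]

lemma M_le_Qr (t : ℝ) (ht : t ∈ Set.Icc (1/2 : ℝ) 1) :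
    2 * t ^ ((4:ℝ)/3) + (4*t*(1-t)) ^ ((2:ℝ)/3) ≤ 2.250430 := by
  obtain ⟨ht1, ht2⟩ := ht
  have ht0 : (0:ℝ) < t := by linarith
  have hw0 : (0:ℝ) ≤ 4*t*(1-t) := by nlinarith
  set y : ℝ := t ^ ((1:ℝ)/3) with hydef
  set z : ℝ := (4*t*(1-t)) ^ ((1:ℝ)/3) with hzdef
  have hy0 : 0 ≤ y := Real.rpow_nonneg ht0.le _
  have hz0 : 0 ≤ z := Real.rpow_nonneg hw0 _
  have hy3 : y ^ (3:ℕ) = t := cbrt_cube t ht0.le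
  have hz3 : z ^ (3:ℕ) = 4*t*(1-t) := cbrt_cube _ hw0
  have hty : (682587:ℝ)/250000 * y ≤ t + 108531333/62500000 := by
    nlinarith [mul_nonneg (sq_nonneg (y - (477:ℝ)/500)) (show (0:ℝ) ≤ y + 2*((477:ℝ)/500) by linarith), hy3]
  have h5 : (682587:ℝ)/250000 * (t * y) ≤ t * (t + 108531333/62500000) := by
    calc (682587:ℝ)/250000 * (t * y) = t * ((682587:ℝ)/250000 * y) := by ring
      _ ≤ t * (t + 108531333/62500000) := mul_le_mul_of_nonneg_left hty ht0.le
  have hzb : (2313:ℝ)/1000 * z^(2:ℕ) ≤ 2*(4*t*(1-t)) + 458314011/1000000000 := by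
    nlinarith [mul_nonneg (sq_nonneg (z - (771:ℝ)/1000)) (show (0:ℝ) ≤ 2*z + (771:ℝ)/1000 by linarith), hz3]
  rw [rpow43_eq t ht0, rpow23_eq _ hw0, ← hydef, ← hzdef]
  nlinarith [sq_nonneg (t - 867637/1000000), h5, hzb]

lemma supSquare_one_zero : supSquare 1 0 0 = 1 := by
  apply le_antisymm
  · apply supSquare_le _ _ _ _ zero_le_one
    intro x y hx hy
    obtain ⟨h1, h2⟩ := abs_le.mp hx
    rw [abs_le]
    constructor <;> nlinarith
  · have := eval_le 1 0 0 1 0 (by norm_num) (by norm_num)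
    norm_num at this
    exact this

lemma supSquare_extremal (t : ℝ) (ht : t ∈ Set.Icc (1/2 : ℝ) 1) :
    supSquare t (2 * Real.sqrt (t * (1 - t))) (-t) = 1 := by
  obtain ⟨ht1, ht2⟩ := ht
  have ht0 : (0:ℝ) < t := by linarith
  have hst : (0:ℝ) ≤ t * (1 - t) := by nlinarith
  set s : ℝ := Real.sqrt (t * (1 - t)) with hsdef
  have hs0 : 0 ≤ s := Real.sqrt_nonneg _
  have hs2 : s^2 = t * (1 - t) := Real.sq_sqrt hst
  have hsle : s ≤ t := by nlinarith
  apply le_antisymm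
  · apply supSquare_le _ _ _ _ zero_le_one
    intro x y hx hy
    obtain ⟨hx1, hx2⟩ := abs_le.mp hx
    obtain ⟨hy1, hy2⟩ := abs_le.mp hy
    have hx2' : x^2 ≤ 1 := by nlinarith
    have hy2' : y^2 ≤ 1 := by nlinarith
    rw [abs_le]
    constructor
    · nlinarith [sq_nonneg (s*y + t*x), mul_nonneg ht0.le (show (0:ℝ) ≤ 1 - y^2 by linarith), hs2]
    · nlinarith [sq_nonneg (s*x - t*y), mul_nonneg ht0.le (show (0:ℝ) ≤ 1 - x^2 by linarith), hs2]
  · have hy : |s/t| ≤ 1 := by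
      rw [abs_of_nonneg (by positivity)]
      rw [div_le_one ht0]
      exact hsle
    have := eval_le t (2*s) (-t) 1 (s/t) (by norm_num) hy
    have hval : t * 1^2 + 2*s * 1 * (s/t) + (-t) * (s/t)^2 = 1 := by
      field_simp
      nlinarith [hs2]
    rwa [hval, abs_one] at this

lemma core (a b c : ℝ) (ha : 0 ≤ a) (hca : |c| ≤ a) (hb : 0 ≤ b)
    (hN : supSquare a b c ≤ 1) :
    (|a| ^ ((4:ℝ)/3) + |b| ^ ((4:ℝ)/3) + |c| ^ ((4:ℝ)/3)) ^ ((3:ℝ)/4)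
      ≤ sSup (f '' Set.Icc (1/2 : ℝ) 1) := by
  have hNa : |a| ≤ 1 := by
    have := (eval_le a b c 1 0 (by norm_num) (by norm_num)).trans hN
    have e : a * 1^2 + b * 1 * 0 + c * 0^2 = a := by ring
    rwa [e] at this
  have ha1 : a ≤ 1 := (abs_le.mp hNa).2
  have h11 : |a + b + c| ≤ 1 := by
    have := (eval_le a b c 1 1 (by norm_num) (by norm_num)).trans hN
    have e : a * 1^2 + b * 1 * 1 + c * 1^2 = a + b + c := by ring
    rwa [e] at this
  have h1m1 : |a - b + c| ≤ 1 := by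
    have := (eval_le a b c 1 (-1) (by norm_num) (by norm_num)).trans hN
    have e : a * 1^2 + b * 1 * (-1) + c * (-1)^2 = a - b + c := by ring
    rwa [e] at this
  obtain ⟨h11a, h11b⟩ := abs_le.mp h11
  obtain ⟨h1m1a, h1m1b⟩ := abs_le.mp h1m1
  have hb1 : b ≤ 1 := by linarith
  have hca' : -a ≤ c ∧ c ≤ a := abs_le.mp hca
  -- key step
  have key : ∃ t ∈ Set.Icc (1/2 : ℝ) 1,
      |a| ^ ((4:ℝ)/3) + |b| ^ ((4:ℝ)/3) + |c| ^ ((4:ℝ)/3) ≤ f t ^ ((4:ℝ)/3) := by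
    have ht0mem : (217:ℝ)/250 ∈ Set.Icc (1/2:ℝ) 1 := by norm_num
    have h2f : (2:ℝ) ≤ f ((217:ℝ)/250) ^ ((4:ℝ)/3) := by
      rw [f_pow43 _ ht0mem]
      linarith [M_t0_ge]
    rw [abs_of_nonneg ha, abs_of_nonneg hb]
    have hcha : a ^ ((4:ℝ)/3) ≤ a := chord a ha ha1
    have hchb : b ^ ((4:ℝ)/3) ≤ b := chord b hb hb1
    by_cases hc : 0 ≤ c
    · -- easy: all nonneg
      refine ⟨(217:ℝ)/250, ht0mem, ?_⟩
      rw [abs_of_nonneg hc]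
      have hchc : c ^ ((4:ℝ)/3) ≤ c := chord c hc (by linarith)
      linarith
    · push_neg at hc
      rw [abs_of_neg hc]
      have hγ0 : 0 < -c := by linarith
      have hγa : -c ≤ a := by linarith [hca'.1]
      by_cases hb2γ : b ≤ 2*(-c)
      · by_cases ha12 : 1/2 ≤ a
        · -- hard case
          refine ⟨a, ⟨ha12, ha1⟩, ?_⟩
          have hy₀ : |b/(2*(-c))| ≤ 1 := by
            rw [abs_of_nonneg (by positivity)]
            rw [div_le_one (by linarith)]
            exact hb2γ
          have hv := (eval_le a b c 1 (b/(2*(-c))) (by norm_num) hy₀).trans hN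
          have hval : a * 1^2 + b * 1 * (b/(2*(-c))) + c * (b/(2*(-c)))^2
              = a + b^2/(4*(-c)) := by
            have hcne : c ≠ 0 := ne_of_lt hc
            field_simp
            ring
          rw [hval] at hv
          have hv2 : a + b^2/(4*(-c)) ≤ 1 := (abs_le.mp hv).2
          have hbb0 : b^2/(4*(-c)) ≤ 1 - a := by linarith
          have hbb1 : b^2 ≤ (1-a) * (4*(-c)) := (div_le_iff₀ (by linarith)).mp hbb0
          have hbb : b^2 ≤ 4*a*(1-a) := by nlinarith
          have h1 : (-c) ^ ((4:ℝ)/3) ≤ a ^ ((4:ℝ)/3) :=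
            Real.rpow_le_rpow hγ0.le hγa (by norm_num)
          have h2 : b ^ ((4:ℝ)/3) ≤ (4*a*(1-a)) ^ ((2:ℝ)/3) := by
            rw [rpow43_sq b hb]
            exact Real.rpow_le_rpow (sq_nonneg b) hbb (by norm_num)
          rw [f_pow43 a ⟨ha12, ha1⟩]
          linarith
        · -- a < 1/2
          push_neg at ha12
          refine ⟨(217:ℝ)/250, ht0mem, ?_⟩
          have hchc : (-c) ^ ((4:ℝ)/3) ≤ -c := chord _ hγ0.le (by linarith)
          linarith
      · -- b > 2γ
        push_neg at hb2γ
        refine ⟨(217:ℝ)/250, ht0mem, ?_⟩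
        have hchc : (-c) ^ ((4:ℝ)/3) ≤ -c := chord _ hγ0.le (by linarith)
        linarith
  obtain ⟨t, ht, hg⟩ := key
  have hft : f t ≤ sSup (f '' Set.Icc (1/2 : ℝ) 1) := f_le_L t ht
  have hg0 : (0:ℝ) ≤ |a| ^ ((4:ℝ)/3) + |b| ^ ((4:ℝ)/3) + |c| ^ ((4:ℝ)/3) := by
    have := Real.rpow_nonneg (abs_nonneg a) ((4:ℝ)/3)
    have := Real.rpow_nonneg (abs_nonneg b) ((4:ℝ)/3)
    have := Real.rpow_nonneg (abs_nonneg c) ((4:ℝ)/3)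
    linarith
  calc (|a| ^ ((4:ℝ)/3) + |b| ^ ((4:ℝ)/3) + |c| ^ ((4:ℝ)/3)) ^ ((3:ℝ)/4)
      ≤ (f t ^ ((4:ℝ)/3)) ^ ((3:ℝ)/4) := Real.rpow_le_rpow hg0 hg (by norm_num)
    _ = f t := by
        rw [← Real.rpow_mul (f_nonneg t ht)]
        rw [show ((4:ℝ)/3) * ((3:ℝ)/4) = 1 by norm_num, Real.rpow_one]
    _ ≤ sSup (f '' Set.Icc (1/2 : ℝ) 1) := hft

lemma main3 (a b c : ℝ) (ha : 0 ≤ a) (hca : |c| ≤ a)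
    (hN : supSquare a b c ≤ 1) :
    (|a| ^ ((4:ℝ)/3) + |b| ^ ((4:ℝ)/3) + |c| ^ ((4:ℝ)/3)) ^ ((3:ℝ)/4)
      ≤ sSup (f '' Set.Icc (1/2 : ℝ) 1) := by
  rcases le_or_gt 0 b with hb | hb
  · exact core a b c ha hca hb hN
  · have hN' : supSquare a (-b) c ≤ 1 := by rwa [supSquare_negb]
    have := core a (-b) c ha hca (by linarith) hN'
    rwa [abs_neg] at this

lemma main2 (a b c : ℝ) (hca : |c| ≤ |a|) (hN : supSquare a b c ≤ 1) :
    (|a| ^ ((4:ℝ)/3) + |b| ^ ((4:ℝ)/3) + |c| ^ ((4:ℝ)/3)) ^ ((3:ℝ)/4)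
      ≤ sSup (f '' Set.Icc (1/2 : ℝ) 1) := by
  rcases le_or_gt 0 a with ha | ha
  · exact main3 a b c ha (by rwa [abs_of_nonneg ha] at hca) hN
  · have hN' : supSquare (-a) (-b) (-c) ≤ 1 := by rwa [supSquare_neg]
    have h2 : |(-c)| ≤ -a := by
      rw [abs_neg]
      rwa [abs_of_neg ha] at hca
    have := main3 (-a) (-b) (-c) (by linarith) h2 hN'
    rwa [abs_neg, abs_neg, abs_neg] at this

lemma main1 (a b c : ℝ) (hN : supSquare a b c ≤ 1) :
    (|a| ^ ((4:ℝ)/3) + |b| ^ ((4:ℝ)/3) + |c| ^ ((4:ℝ)/3)) ^ ((3:ℝ)/4)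
      ≤ sSup (f '' Set.Icc (1/2 : ℝ) 1) := by
  rcases le_total |c| |a| with h | h
  · exact main2 a b c h hN
  · have hN' : supSquare c b a ≤ 1 := by rwa [← supSquare_swap]
    have := main2 c b a h hN'
    have e : |c| ^ ((4:ℝ)/3) + |b| ^ ((4:ℝ)/3) + |a| ^ ((4:ℝ)/3)
        = |a| ^ ((4:ℝ)/3) + |b| ^ ((4:ℝ)/3) + |c| ^ ((4:ℝ)/3) := by ring
    rwa [e] at this

lemma membership (a b c : ℝ) :
    (|a| ^ ((4:ℝ)/3) + |b| ^ ((4:ℝ)/3) + |c| ^ ((4:ℝ)/3)) ^ ((3:ℝ)/4)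
      ≤ sSup (f '' Set.Icc (1/2 : ℝ) 1) * supSquare a b c := by
  set L := sSup (f '' Set.Icc (1/2 : ℝ) 1) with hLdef
  set N := supSquare a b c with hNdef
  have hN0 : 0 ≤ N := supSquare_nonneg a b c
  rcases hN0.eq_or_lt with hN | hN
  · -- N = 0, so a = b = c = 0
    have hNz : supSquare a b c = 0 := by rw [← hNdef, ← hN]
    have hA : |a| ≤ 0 := by
      have := eval_le a b c 1 0 (by norm_num) (by norm_num)
      have e : a * 1^2 + b * 1 * 0 + c * 0^2 = a := by ring
      rw [e] at this
      rwa [hNz] at this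
    have hC : |c| ≤ 0 := by
      have := eval_le a b c 0 1 (by norm_num) (by norm_num)
      have e : a * 0^2 + b * 0 * 1 + c * 1^2 = c := by ring
      rw [e] at this
      rwa [hNz] at this
    have hB : |a + b + c| ≤ 0 := by
      have := eval_le a b c 1 1 (by norm_num) (by norm_num)
      have e : a * 1^2 + b * 1 * 1 + c * 1^2 = a + b + c := by ring
      rw [e] at this
      rwa [hNz] at this
    have ha0 : a = 0 := abs_nonpos_iff.mp hA
    have hc0 : c = 0 := abs_nonpos_iff.mp hC
    have hb0 : b = 0 := by
      have := abs_nonpos_iff.mp hB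
      rw [ha0, hc0] at this; linarith
    rw [ha0, hb0, hc0, ← hN]
    simp [Real.zero_rpow (by norm_num : ((4:ℝ)/3) ≠ 0),
      Real.zero_rpow (by norm_num : ((3:ℝ)/4) ≠ 0)]
  · have hNinv : 0 < N⁻¹ := by positivity
    have hscale : supSquare (N⁻¹ * a) (N⁻¹ * b) (N⁻¹ * c) ≤ 1 := by
      rw [supSquare_smul a b c N⁻¹ hNinv, ← hNdef, inv_mul_cancel₀ (ne_of_gt hN)]
    have hmain := main1 (N⁻¹ * a) (N⁻¹ * b) (N⁻¹ * c) hscale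
    have habs : ∀ x : ℝ, |N⁻¹ * x| ^ ((4:ℝ)/3) = N⁻¹ ^ ((4:ℝ)/3) * |x| ^ ((4:ℝ)/3) := by
      intro x
      rw [abs_mul, abs_of_pos hNinv, Real.mul_rpow hNinv.le (abs_nonneg x)]
    rw [habs a, habs b, habs c, ← mul_add, ← mul_add] at hmain
    have hsum0 : (0:ℝ) ≤ |a| ^ ((4:ℝ)/3) + |b| ^ ((4:ℝ)/3) + |c| ^ ((4:ℝ)/3) := by
      have := Real.rpow_nonneg (abs_nonneg a) ((4:ℝ)/3)
      have := Real.rpow_nonneg (abs_nonneg b) ((4:ℝ)/3)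
      have := Real.rpow_nonneg (abs_nonneg c) ((4:ℝ)/3)
      linarith
    rw [Real.mul_rpow (by positivity) hsum0] at hmain
    have hNpow : (N⁻¹ ^ ((4:ℝ)/3)) ^ ((3:ℝ)/4) = N⁻¹ := by
      rw [← Real.rpow_mul hNinv.le]
      norm_num
    rw [hNpow] at hmain
    -- hmain : N⁻¹ * sum ^ (3/4) ≤ L
    have := mul_le_mul_of_nonneg_left hmain hN0
    rw [← mul_assoc, mul_inv_cancel₀ (ne_of_gt hN), one_mul] at this
    calc (|a| ^ ((4:ℝ)/3) + |b| ^ ((4:ℝ)/3) + |c| ^ ((4:ℝ)/3)) ^ ((3:ℝ)/4)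
        ≤ N * L := this
      _ = L * N := mul_comm _ _

lemma minimality (D : ℝ)
    (hD : ∀ a b c : ℝ,
      (|a| ^ ((4:ℝ)/3) + |b| ^ ((4:ℝ)/3) + |c| ^ ((4:ℝ)/3)) ^ ((3:ℝ)/4)
        ≤ D * supSquare a b c) :
    sSup (f '' Set.Icc (1/2 : ℝ) 1) ≤ D := by
  have hD1 : 1 ≤ D := by
    have := hD 1 0 0
    rw [supSquare_one_zero, mul_one] at this
    simpa [Real.zero_rpow (by norm_num : ((4:ℝ)/3) ≠ 0),
      Real.one_rpow] using this
  apply Real.sSup_le _ (by linarith)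
  rintro v ⟨t, ht, rfl⟩
  have hE := hD t (2 * Real.sqrt (t * (1 - t))) (-t)
  rw [supSquare_extremal t ht, mul_one] at hE
  have ht0 : (0:ℝ) ≤ t := by linarith [ht.1]
  have hs0 : (0:ℝ) ≤ 2 * Real.sqrt (t * (1 - t)) := by positivity
  rw [abs_neg, abs_of_nonneg ht0, abs_of_nonneg hs0] at hE
  have e : t ^ ((4:ℝ)/3) + (2 * Real.sqrt (t * (1 - t))) ^ ((4:ℝ)/3) + t ^ ((4:ℝ)/3)
      = 2 * t ^ ((4:ℝ)/3) + (2 * Real.sqrt (t * (1 - t))) ^ ((4:ℝ)/3) := by ring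
  rw [e] at hE
  rw [f]
  exact hE

lemma pow34_lt_of (x q : ℝ) (hx : 0 ≤ x) (hq : 0 ≤ q) (h : x^(3:ℕ) < q^(4:ℕ)) :
    x ^ ((3:ℝ)/4) < q := by
  have h4 : (x ^ ((3:ℝ)/4)) ^ (4:ℕ) = x ^ (3:ℕ) := by
    rw [← Real.rpow_natCast (x ^ ((3:ℝ)/4)) 4, ← Real.rpow_mul hx,
      ← Real.rpow_natCast x 3]
    norm_num
  refine lt_of_pow_lt_pow_left₀ 4 hq ?_
  rw [h4]
  exact h

lemma lt_pow34_of (x q : ℝ) (hx : 0 ≤ x) (h : q^(4:ℕ) < x^(3:ℕ)) :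
    q < x ^ ((3:ℝ)/4) := by
  have h4 : (x ^ ((3:ℝ)/4)) ^ (4:ℕ) = x ^ (3:ℕ) := by
    rw [← Real.rpow_natCast (x ^ ((3:ℝ)/4)) 4, ← Real.rpow_mul hx,
      ← Real.rpow_natCast x 3]
    norm_num
  refine lt_of_pow_lt_pow_left₀ 4 (Real.rpow_nonneg hx _) ?_
  rw [h4]
  exact h

lemma numeric_bounds :
    sSup (f '' Set.Icc (1/2 : ℝ) 1) ∈ Set.Ioo (1.8373 : ℝ) 1.8374 := by
  constructor
  · -- lower
    have ht0mem : (217:ℝ)/250 ∈ Set.Icc (1/2:ℝ) 1 := by norm_num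
    have h1 : (2.2503805 : ℝ) ^ ((3:ℝ)/4) ≤ f ((217:ℝ)/250) := by
      rw [f_eq _ ht0mem]
      exact Real.rpow_le_rpow (by norm_num) M_t0_ge (by norm_num)
    have h2 : (1.8373 : ℝ) < (2.2503805 : ℝ) ^ ((3:ℝ)/4) :=
      lt_pow34_of _ _ (by norm_num) (by norm_num)
    calc (1.8373 : ℝ) < (2.2503805 : ℝ) ^ ((3:ℝ)/4) := h2
      _ ≤ f ((217:ℝ)/250) := h1
      _ ≤ sSup (f '' Set.Icc (1/2 : ℝ) 1) := f_le_L _ ht0mem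
  · -- upper
    have hQ : sSup (f '' Set.Icc (1/2 : ℝ) 1) ≤ (2.250430 : ℝ) ^ ((3:ℝ)/4) := by
      apply Real.sSup_le _ (Real.rpow_nonneg (by norm_num) _)
      rintro v ⟨t, ht, rfl⟩
      rw [f_eq t ht]
      have hM0 : (0:ℝ) ≤ 2 * t ^ ((4:ℝ)/3) + (4*t*(1-t)) ^ ((2:ℝ)/3) := by
        have h1 : (0:ℝ) ≤ t ^ ((4:ℝ)/3) := Real.rpow_nonneg (by linarith [ht.1]) _
        have h2 : (0:ℝ) ≤ (4*t*(1-t)) ^ ((2:ℝ)/3) :=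
          Real.rpow_nonneg (by nlinarith [ht.1, ht.2]) _
        linarith
      exact Real.rpow_le_rpow hM0 (M_le_Qr t ht) (by norm_num)
    have h2 : (2.250430 : ℝ) ^ ((3:ℝ)/4) < 1.8374 :=
      pow34_lt_of _ _ (by norm_num) (by norm_num) (by norm_num)
    linarith

theorem stmt8 :
    IsLeast {D : ℝ | ∀ a b c : ℝ,
        (|a| ^ ((4:ℝ)/3) + |b| ^ ((4:ℝ)/3) + |c| ^ ((4:ℝ)/3)) ^ ((3:ℝ)/4)
          ≤ D * supSquare a b c}
      (sSup (f '' Set.Icc (1/2 : ℝ) 1)) ∧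
    sSup (f '' Set.Icc (1/2 : ℝ) 1) ∈ Set.Ioo (1.8373 : ℝ) 1.8374 := by
  refine ⟨⟨?_, ?_⟩, numeric_bounds⟩
  · intro a b c
    exact membership a b c
  · intro D hD
    exact minimality D hD
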